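/- Fix p ≥ 1, eigenvalues d₁², ..., d_p² ≥ 0 not all zero, and values u₁, ..., u_p ∈ [0, +∞]. Suppose the function g_p(γ) = (1/p) Σ_i 1/[(d_i² - γ)((1/p)Σ_j 1/(γ+u_j)) + 1] is well-defined on (0,∞). Then g_p is strictly increasing on (0, ∞) if there exists j with u_j ≠ +∞; otherwise (if u_j = +∞ for all j) g_p(γ) = 1 for all γ > 0. -/
import Mathlib


open Set

/-- Average of `1/(γ + u_j)`, with the convention `1/(γ + ∞) = 0`. -/
noncomputable def avgInv {p : ℕ} (u : Fin p → ENNReal) (γ : ℝ) : ℝ :=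
  (1 / (p : ℝ)) * ∑ j, ((ENNReal.ofReal γ + u j)⁻¹).toReal

/-- The `i`-th denominator of the Spectrum-Aware adjustment equation. -/
noncomputable def saDenom {p : ℕ} (d2 : Fin p → ℝ) (u : Fin p → ENNReal)
    (i : Fin p) (γ : ℝ) : ℝ :=
  (d2 i - γ) * avgInv u γ + 1

/-- The adjustment function `g_p`. -/
noncomputable def gp {p : ℕ} (d2 : Fin p → ℝ) (u : Fin p → ENNReal) (γ : ℝ) : ℝ :=
  (1 / (p : ℝ)) * ∑ i, (saDenom d2 u i γ)⁻¹

private lemma Fval {γ : ℝ} (hγ : 0 < γ) (x : ENNReal) (hx : x ≠ ⊤) :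
    ((ENNReal.ofReal γ + x)⁻¹).toReal = 1 / (γ + x.toReal) := by
  conv_lhs => rw [← ENNReal.ofReal_toReal hx]
  rw [← ENNReal.ofReal_add hγ.le ENNReal.toReal_nonneg,
    ← ENNReal.ofReal_inv_of_pos (by positivity),
    ENNReal.toReal_ofReal (by positivity), one_div]

private lemma Ftop (γ : ℝ) : ((ENNReal.ofReal γ + (⊤ : ENNReal))⁻¹).toReal = 0 := by
  simp

private lemma F_le {a b : ℝ} (ha : 0 < a) (hab : a < b) (x : ENNReal) :
    ((ENNReal.ofReal b + x)⁻¹).toReal ≤ ((ENNReal.ofReal a + x)⁻¹).toReal := by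
  by_cases hx : x = ⊤
  · simp [hx, Ftop]
  · rw [Fval ha x hx, Fval (ha.trans hab) x hx]
    have ht : (0:ℝ) ≤ x.toReal := ENNReal.toReal_nonneg
    apply one_div_le_one_div_of_le (by linarith)
    linarith

private lemma F_lt {a b : ℝ} (ha : 0 < a) (hab : a < b) (x : ENNReal) (hx : x ≠ ⊤) :
    ((ENNReal.ofReal b + x)⁻¹).toReal < ((ENNReal.ofReal a + x)⁻¹).toReal := by
  rw [Fval ha x hx, Fval (ha.trans hab) x hx]
  have ht : (0:ℝ) ≤ x.toReal := ENNReal.toReal_nonneg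
  apply one_div_lt_one_div_of_lt (by linarith)
  linarith

private lemma c_le {a b : ℝ} (ha : 0 < a) (hab : a < b) (x : ENNReal) :
    1 - b * ((ENNReal.ofReal b + x)⁻¹).toReal ≤
      1 - a * ((ENNReal.ofReal a + x)⁻¹).toReal := by
  by_cases hx : x = ⊤
  · simp [hx, Ftop]
  · rw [Fval ha x hx, Fval (ha.trans hab) x hx]
    have ht : (0:ℝ) ≤ x.toReal := ENNReal.toReal_nonneg
    have h1 : (0:ℝ) < a + x.toReal := by linarith
    have h2 : (0:ℝ) < b + x.toReal := by linarith
    have : a * (1 / (a + x.toReal)) ≤ b * (1 / (b + x.toReal)) := by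
      rw [mul_one_div, mul_one_div, div_le_div_iff₀ h1 h2]
      nlinarith
    linarith

private lemma saDenom_eq {p : ℕ} (hp : 0 < p) (d2 : Fin p → ℝ) (u : Fin p → ENNReal)
    (i : Fin p) (γ : ℝ) :
    saDenom d2 u i γ = d2 i * avgInv u γ +
      (1 / (p : ℝ)) * ∑ j, (1 - γ * ((ENNReal.ofReal γ + u j)⁻¹).toReal) := by
  have hpne : (p : ℝ) ≠ 0 := Nat.cast_ne_zero.mpr hp.ne'
  unfold saDenom avgInv
  rw [Finset.sum_sub_distrib, Finset.sum_const, Finset.card_univ, Fintype.card_fin,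
    ← Finset.mul_sum]
  field_simp
  ring

theorem gp_strictMono_or_const
    {p : ℕ} (hp : 0 < p)
    (d2 : Fin p → ℝ) (hd2 : ∀ i, 0 ≤ d2 i) (hne : ∃ i, d2 i ≠ 0)
    (u : Fin p → ENNReal)
    (hwd : ∀ γ > (0 : ℝ), ∀ i, 0 < saDenom d2 u i γ) :
    ((∃ j, u j ≠ ⊤) → StrictMonoOn (gp d2 u) (Set.Ioi 0)) ∧
      ((∀ j, u j = ⊤) → ∀ γ > (0 : ℝ), gp d2 u γ = 1) := by
  have hpR : (0:ℝ) < p := Nat.cast_pos.mpr hp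
  constructor
  · rintro ⟨j0, hj0⟩ a ha b hb hab
    simp only [Set.mem_Ioi] at ha hb
    have hA : avgInv u b ≤ avgInv u a := by
      unfold avgInv
      apply mul_le_mul_of_nonneg_left _ (by positivity)
      exact Finset.sum_le_sum fun j _ => F_le ha hab (u j)
    have hAs : avgInv u b < avgInv u a := by
      unfold avgInv
      apply mul_lt_mul_of_pos_left _ (by positivity)
      exact Finset.sum_lt_sum (fun j _ => F_le ha hab (u j))
        ⟨j0, Finset.mem_univ _, F_lt ha hab (u j0) hj0⟩
    have hC : (1 / (p : ℝ)) * ∑ j, (1 - b * ((ENNReal.ofReal b + u j)⁻¹).toReal) ≤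
        (1 / (p : ℝ)) * ∑ j, (1 - a * ((ENNReal.ofReal a + u j)⁻¹).toReal) := by
      apply mul_le_mul_of_nonneg_left _ (by positivity)
      exact Finset.sum_le_sum fun j _ => c_le ha hab (u j)
    have key : ∀ i, saDenom d2 u i b ≤ saDenom d2 u i a := by
      intro i
      rw [saDenom_eq hp, saDenom_eq hp]
      have := mul_le_mul_of_nonneg_left hA (hd2 i)
      linarith
    obtain ⟨i0, hi0⟩ := hne
    have hd0 : 0 < d2 i0 := (hd2 i0).lt_of_ne (Ne.symm hi0)
    have keys : saDenom d2 u i0 b < saDenom d2 u i0 a := by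
      rw [saDenom_eq hp, saDenom_eq hp]
      have := mul_lt_mul_of_pos_left hAs hd0
      linarith
    have hsum : ∑ i, (saDenom d2 u i a)⁻¹ < ∑ i, (saDenom d2 u i b)⁻¹ := by
      apply Finset.sum_lt_sum
      · intro i _
        exact inv_anti₀ (hwd b hb i) (key i)
      · exact ⟨i0, Finset.mem_univ _, inv_strictAnti₀ (hwd b hb i0) keys⟩
    unfold gp
    exact mul_lt_mul_of_pos_left hsum (by positivity)
  · intro hall γ hγ
    have hz : ∀ j : Fin p, ((ENNReal.ofReal γ + u j)⁻¹).toReal = 0 := by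
      intro j; rw [hall j]; exact Ftop γ
    have hpne : (p : ℝ) ≠ 0 := Nat.cast_ne_zero.mpr hp.ne'
    unfold gp saDenom avgInv
    simp [hz, hpne]
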